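/- Let A = [[1,1],[0,1]] and B = [[1,0],[-1,1]] in SL(2,ℤ). Then for every integer n ≥ 1, A^(8n) * B * (∏_{i=1}^{2n-1} A^(2i) * B^2 * A^(-2i)) * (A^(4n) * B * A^(-4n)) = 1, where the product is taken in increasing order of i. -/

import Mathlib

/-- Auxiliary: upper triangular unipotent matrices. -/
def Up (m : ℤ) : Matrix.SpecialLinearGroup (Fin 2) ℤ :=
  ⟨!![1, m; 0, 1], by norm_num [Matrix.det_fin_two_of]⟩

/-- The matrix of the right-handed Dehn twist `t_a` in `SL(2, ℤ)`. -/
def DehnA : Matrix.SpecialLinearGroup (Fin 2) ℤ :=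
  ⟨!![1, 1; 0, 1], by norm_num [Matrix.det_fin_two_of]⟩

/-- The matrix of the right-handed Dehn twist `t_b` in `SL(2, ℤ)`. -/
def DehnB : Matrix.SpecialLinearGroup (Fin 2) ℤ :=
  ⟨!![1, 0; -1, 1], by norm_num [Matrix.det_fin_two_of]⟩

lemma up_mul (a b : ℤ) : Up a * Up b = Up (a + b) := by
  apply Subtype.ext
  show (Up a).1 * (Up b).1 = _
  simp [Up, Matrix.mul_fin_two]; ring

lemma dehnA_pow (m : ℕ) : DehnA ^ m = Up m := by
  induction m with
  | zero => apply Subtype.ext; simp [Up, Matrix.one_fin_two]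
  | succ k ih =>
      rw [pow_succ, ih]
      have : DehnA = Up 1 := rfl
      rw [this, up_mul]; push_cast; ring_nf

lemma up_inv (m : ℤ) : (Up m)⁻¹ = Up (-m) := by
  rw [inv_eq_of_mul_eq_one_right]
  rw [up_mul, add_neg_cancel]
  apply Subtype.ext; simp [Up, Matrix.one_fin_two]

/-- The partial product matrix, `e = (-1)^k`, `X = 8n - 2k - 1`. -/
def Mk (n k : ℕ) : Matrix.SpecialLinearGroup (Fin 2) ℤ :=
  ⟨!![-(-1:ℤ)^k * (8*n - 2*k - 1), (-1:ℤ)^k * (1 + (8*n - 2*k - 1) * (2*k + 1));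
      -(-1:ℤ)^k, (-1:ℤ)^k * (2*k + 1)], by
    have he : ((-1:ℤ)^k) * ((-1:ℤ)^k) = 1 := by
      rw [← pow_add, ← two_mul, pow_mul]; norm_num
    rw [Matrix.det_fin_two_of]
    linear_combination (1 : ℤ) * he⟩

lemma key (n : ℕ) : ∀ k : ℕ,
    DehnA ^ (8 * n) * DehnB *
      (((List.range k).map
        (fun i => DehnA ^ (2 * (i + 1)) * DehnB ^ 2 * (DehnA ^ (2 * (i + 1)))⁻¹)).prod)
      = Mk n k := by
  intro k
  induction k with
  | zero =>
      simp only [List.range_zero, List.map_nil, List.prod_nil, mul_one]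
      rw [dehnA_pow]
      apply Subtype.ext
      show (Up (8*n)).1 * DehnB.1 = _
      simp [Up, DehnB, Mk, Matrix.mul_fin_two]
      ring
  | succ k ih =>
      rw [List.range_succ, List.map_append, List.prod_append, ← mul_assoc, ih]
      simp only [List.map_cons, List.map_nil, List.prod_cons, List.prod_nil, mul_one]
      rw [dehnA_pow, up_inv]
      have hB2 : (DehnB ^ 2 : Matrix.SpecialLinearGroup (Fin 2) ℤ) = (⟨!![1, 0; -2, 1], by norm_num [Matrix.det_fin_two_of]⟩ :
          Matrix.SpecialLinearGroup (Fin 2) ℤ) := by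
        rw [sq]
        apply Subtype.ext
        show DehnB.1 * DehnB.1 = _
        simp [DehnB, Matrix.mul_fin_two]
      rw [hB2]
      apply Subtype.ext
      have he : ((-1:ℤ)^k) * ((-1:ℤ)^k) = 1 := by
        rw [← pow_add, ← two_mul, pow_mul]; norm_num
      show (Mk n k).1 * ((Up (2*(k+1))).1 * _ * (Up (-(2*(k+1):ℕ))).1) = (Mk n (k+1)).1
      simp only [Mk, Up, Matrix.mul_fin_two]
      ext i j
      fin_cases i <;> fin_cases j <;>
        · simp [Matrix.cons_val_zero, Matrix.cons_val_one]
          rcases mul_self_eq_one_iff.mp he with h | h <;>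
            simp only [pow_succ, h] <;> ring

theorem monodromy_factorization_eq_one :
    ∀ n : ℕ, 1 ≤ n →
      DehnA ^ (8 * n) * DehnB *
        (((List.range (2 * n - 1)).map
          (fun i => DehnA ^ (2 * (i + 1)) * DehnB ^ 2 * (DehnA ^ (2 * (i + 1)))⁻¹)).prod) *
        (DehnA ^ (4 * n) * DehnB * (DehnA ^ (4 * n))⁻¹) = 1 := by
  intro n hn
  rw [key n, dehnA_pow, up_inv]
  have hodd : Odd (2 * n - 1) := by
    refine ⟨n - 1, by omega⟩
  have he : ((-1:ℤ) ^ (2 * n - 1)) = -1 := hodd.neg_one_pow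
  have hc : ((2 * n - 1 : ℕ) : ℤ) = 2 * n - 1 := by
    push_cast [Nat.cast_sub (by omega : 1 ≤ 2 * n)]; ring
  apply Subtype.ext
  show (Mk n (2*n-1)).1 * ((Up (4*n)).1 * DehnB.1 * (Up (-(4*n:ℕ))).1) = 1
  simp only [Mk, Up, DehnB, Matrix.mul_fin_two, he, hc, Matrix.one_fin_two]
  ext i j
  fin_cases i <;> fin_cases j <;>
    · simp
      ring_nf
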